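/- arXiv:1004.5503 — 7 statements merged into one kernel-verified Lean document; each statement's English description precedes it below -/
import Mathlib

section
/- Let C : (Fin n → ι) → ι → k be totally antisymmetric structure constants satisfying the generalized Jacobi identity, and let N be a natural number. Define expanded structure constants C̃ on the index set ι × Fin (N+1) by C̃ ((i₁,β₁),…,(iₙ,βₙ)) (t,α) = C (i₁,…,iₙ) t if β₁+⋯+βₙ = α (as natural numbers) and C̃ ((i₁,β₁),…,(iₙ,βₙ)) (t,α) = 0 otherwise. Then C̃ is totally antisymmetric under simultaneous permutation (with sign) of its n lower index pairs and satisfies the generalized Jacobi identity on the index set ι × Fin (N+1); hence it determines a higher-order Lie algebra 𝔊(N) of order n. -/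
noncomputable section

/-- Total antisymmetry of structure constants: composing the lower indices with a
permutation multiplies by the sign. -/
def IsTotallyAntisymmetric {k ι : Type*} [CommRing k] {n : ℕ}
    (C : (Fin n → ι) → ι → k) : Prop :=
  ∀ (σ : Equiv.Perm (Fin n)) (i : Fin n → ι) (t : ι),
    C (i ∘ σ) t = (Equiv.Perm.sign σ : ℤ) • C i t

/-- The generalized Jacobi identity for structure constants of a higher-order Lie
algebra of order `n`. -/
def SatisfiesGJI {k ι : Type*} [CommRing k] [Fintype ι] {n : ℕ}
    (C : (Fin n → ι) → ι → k) : Prop :=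
  ∀ (j : Fin (2 * n - 1) → ι) (t : ι),
    (∑ σ : Equiv.Perm (Fin (2 * n - 1)),
      (Equiv.Perm.sign σ : ℤ) •
        ∑ ρ : ι,
          C (fun l : Fin n => j (σ ⟨(l : ℕ), lt_of_lt_of_le l.isLt (by omega)⟩)) ρ *
          C (fun l : Fin n =>
              if hl : (l : ℕ) = 0 then ρ
              else j (σ ⟨n + (l : ℕ) - 1, by have := l.isLt; omega⟩)) t) = 0

/-- The expanded structure constants of the power-series (Maurer-Cartan) expansion:
`C̃ ((i₁,β₁),…,(iₙ,βₙ)) (t,α) = C (i₁,…,iₙ) t` if `β₁+⋯+βₙ = α` and `0` otherwise. -/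
def expandedC {k ι : Type*} [CommRing k] {n N : ℕ}
    (C : (Fin n → ι) → ι → k) :
    (Fin n → ι × Fin (N + 1)) → (ι × Fin (N + 1)) → k :=
  fun i t =>
    if (∑ l, ((i l).2 : ℕ)) = (t.2 : ℕ) then C (fun l => (i l).1) t.1 else 0

private lemma aux_fin_sum {k : Type*} [CommRing k] (N A B t2 : ℕ) (ht : t2 ≤ N) (x y : k) :
    ∑ ρ₂ : Fin (N+1), (if A = (ρ₂:ℕ) then x else 0) * (if (ρ₂:ℕ) + B = t2 then y else 0)
    = if A + B = t2 then x*y else 0 := by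
  rcases le_or_gt A N with h | h
  · rw [Finset.sum_eq_single (⟨A, by omega⟩ : Fin (N+1))]
    · simp
    · intro b _ hb
      have : A ≠ (b:ℕ) := fun e => hb (by ext; simp [← e])
      simp [this]
    · simp
  · have h2 : A + B ≠ t2 := by omega
    rw [if_neg h2]
    apply Finset.sum_eq_zero
    intro b _
    have : A ≠ (b:ℕ) := by have := b.isLt; omega
    simp [this]

private lemma aux_split_sum (n : ℕ) (hn : 2 ≤ n) (h : Fin (2*n-1) → ℕ) :
    haveI : NeZero n := ⟨by omega⟩
    ((∑ l : Fin n, h ⟨(l:ℕ), by have := l.isLt; omega⟩) +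
      ∑ l ∈ Finset.univ.erase (0 : Fin n), h ⟨n + (l:ℕ) - 1, by have := l.isLt; omega⟩)
    = ∑ m : Fin (2*n-1), h m := by
  haveI : NeZero n := ⟨by omega⟩
  rw [← Finset.sum_filter_add_sum_filter_not Finset.univ (fun m : Fin (2*n-1) => (m:ℕ) < n) h]
  congr 1
  · refine Finset.sum_nbij' (i := fun l : Fin n => (⟨(l:ℕ), by have := l.isLt; omega⟩ : Fin (2*n-1)))
      (j := fun m : Fin (2*n-1) => (⟨min (m:ℕ) (n-1), by omega⟩ : Fin n)) ?_ ?_ ?_ ?_ ?_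
    · intro l _; simp [l.isLt]
    · intro m _; simp
    · intro l _; ext; simp; have := l.isLt; omega
    · intro m hm; simp at hm; ext; simp; omega
    · intro l _; rfl
  · refine Finset.sum_nbij'
      (i := fun l : Fin n => (⟨n + (l:ℕ) - 1, by have := l.isLt; omega⟩ : Fin (2*n-1)))
      (j := fun m : Fin (2*n-1) => (⟨(m:ℕ) - n + 1, by have := m.isLt; omega⟩ : Fin n)) ?_ ?_ ?_ ?_ ?_
    · intro l hl; simp at hl ⊢
      have : (l:ℕ) ≠ 0 := fun e => hl (by ext; simp [e])
      omega
    · intro m hm; simp at hm ⊢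
    · intro l hl; simp at hl
      have : (l:ℕ) ≠ 0 := fun e => hl (by ext; simp [e])
      ext; simp; omega
    · intro m hm; simp at hm; ext; simp; omega
    · intro l _; rfl

private lemma expanded_inner {k ι : Type*} [CommRing k] [Fintype ι] {n N : ℕ}
    (hn : 2 ≤ n) (C : (Fin n → ι) → ι → k)
    (f : Fin (2*n-1) → ι × Fin (N+1)) (t : ι × Fin (N+1)) :
    (∑ ρ : ι × Fin (N+1),
      expandedC (N := N) C
        (fun l : Fin n => f ⟨(l : ℕ), lt_of_lt_of_le l.isLt (by omega)⟩) ρ *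
      expandedC (N := N) C
        (fun l : Fin n =>
          if hl : (l : ℕ) = 0 then ρ
          else f ⟨n + (l : ℕ) - 1, by have := l.isLt; omega⟩) t)
    = if (∑ m, ((f m).2 : ℕ)) = (t.2 : ℕ) then
        ∑ ρ : ι,
          C (fun l : Fin n => (f ⟨(l : ℕ), lt_of_lt_of_le l.isLt (by omega)⟩).1) ρ *
          C (fun l : Fin n =>
              if hl : (l : ℕ) = 0 then ρ
              else (f ⟨n + (l : ℕ) - 1, by have := l.isLt; omega⟩).1) t.1
      else 0 := by
  haveI : NeZero n := ⟨by omega⟩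
  have hsplit := aux_split_sum n hn (fun m => ((f m).2 : ℕ))
  rw [Fintype.sum_prod_type]
  trans (∑ ρ₁ : ι,
    if (∑ l : Fin n, ((f ⟨(l : ℕ), lt_of_lt_of_le l.isLt (by omega)⟩).2 : ℕ)) +
        (∑ l ∈ Finset.univ.erase (0 : Fin n),
          ((f ⟨n + (l : ℕ) - 1, by have := l.isLt; omega⟩).2 : ℕ)) = (t.2 : ℕ) then
      C (fun l : Fin n => (f ⟨(l : ℕ), lt_of_lt_of_le l.isLt (by omega)⟩).1) ρ₁ *
      C (fun l : Fin n =>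
          if hl : (l : ℕ) = 0 then ρ₁
          else (f ⟨n + (l : ℕ) - 1, by have := l.isLt; omega⟩).1) t.1
    else 0)
  · -- inner sum over ρ₂
    refine Finset.sum_congr rfl fun ρ₁ _ => ?_
    refine Eq.trans (Finset.sum_congr rfl fun ρ₂ _ => ?_)
      (aux_fin_sum N
        (∑ l : Fin n, ((f ⟨(l : ℕ), lt_of_lt_of_le l.isLt (by omega)⟩).2 : ℕ))
        (∑ l ∈ Finset.univ.erase (0 : Fin n),
          ((f ⟨n + (l : ℕ) - 1, by have := l.isLt; omega⟩).2 : ℕ))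
        (t.2 : ℕ) (by have := t.2.isLt; omega)
        (C (fun l : Fin n => (f ⟨(l : ℕ), lt_of_lt_of_le l.isLt (by omega)⟩).1) ρ₁)
        (C (fun l : Fin n =>
            if hl : (l : ℕ) = 0 then ρ₁
            else (f ⟨n + (l : ℕ) - 1, by have := l.isLt; omega⟩).1) t.1))
    refine congrArg₂ (· * ·) rfl ?_
    show expandedC (N := N) C _ t = _
    unfold expandedC
    refine if_congr (iff_of_eq (congrArg (· = (t.2 : ℕ)) ?_)) (congrArg (C · t.1) ?_) rfl
    · -- the β-sum of the second block of indices
      rw [← Finset.add_sum_erase _ _ (Finset.mem_univ (0 : Fin n))]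
      refine congrArg₂ (· + ·)
        (congrArg (fun p : ι × Fin (N+1) => ((p.2 : ℕ))) (dif_pos (by simp)))
        (Finset.sum_congr rfl fun l hl => ?_)
      have hl0 : (l : ℕ) ≠ 0 := by
        intro e
        exact (Finset.mem_erase.mp hl).1 (by ext; simp [e])
      exact congrArg (fun p : ι × Fin (N+1) => ((p.2 : ℕ))) (dif_neg hl0)
    · -- the first components of the second block of indices
      funext l
      by_cases hl : (l : ℕ) = 0 <;> simp [hl]
  · -- pull the ite out of the ρ₁-sum and use the index-splitting identity
    by_cases hc : (∑ m, ((f m).2 : ℕ)) = (t.2 : ℕ)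
    · refine Eq.trans (Finset.sum_congr rfl fun ρ₁ _ => if_pos (hsplit.trans hc)) ?_
      exact (if_pos hc).symm
    · refine Eq.trans (Finset.sum_eq_zero fun ρ₁ _ => if_neg fun e => hc (hsplit.symm.trans e)) ?_
      exact (if_neg hc).symm

/-- The expanded structure constants are totally antisymmetric and satisfy the
generalized Jacobi identity on `ι × Fin (N+1)`; hence they determine the expanded
higher-order Lie algebra `𝔊(N)` of order `n`. -/
theorem expandedC_isMultialgebra {k ι : Type*} [CommRing k] [Fintype ι] {n : ℕ}
    (hn : 2 ≤ n) (C : (Fin n → ι) → ι → k)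
    (hA : IsTotallyAntisymmetric C) (hJ : SatisfiesGJI C) (N : ℕ) :
    IsTotallyAntisymmetric (expandedC (N := N) C) ∧
    SatisfiesGJI (expandedC (N := N) C) := by
  constructor
  · intro σ i t
    unfold expandedC
    have hs : (∑ l, (((i ∘ σ) l).2 : ℕ)) = ∑ l, ((i l).2 : ℕ) :=
      Equiv.sum_comp σ (fun l => ((i l).2 : ℕ))
    rw [hs]
    split
    · exact hA σ (fun l => (i l).1) t.1
    · simp
  · intro j t
    trans (∑ σ : Equiv.Perm (Fin (2 * n - 1)),
      (Equiv.Perm.sign σ : ℤ) •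
        (if (∑ m, ((j m).2 : ℕ)) = (t.2 : ℕ) then
          ∑ ρ : ι,
            C (fun l : Fin n => (j (σ ⟨(l : ℕ), lt_of_lt_of_le l.isLt (by omega)⟩)).1) ρ *
            C (fun l : Fin n =>
                if hl : (l : ℕ) = 0 then ρ
                else (j (σ ⟨n + (l : ℕ) - 1, by have := l.isLt; omega⟩)).1) t.1
        else 0))
    · refine Finset.sum_congr rfl fun σ _ => ?_
      have h := expanded_inner hn C (fun m => j (σ m)) t
      rw [Equiv.sum_comp σ (fun m => ((j m).2 : ℕ))] at h
      exact congrArg (fun x => ((Equiv.Perm.sign σ : ℤ)) • x) h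
    · by_cases hc : (∑ m, ((j m).2 : ℕ)) = (t.2 : ℕ)
      · simp only [if_pos hc]
        exact hJ (fun m => (j m).1) t.1
      · simp only [if_neg hc, smul_zero, Finset.sum_const_zero]
end
end

section
/- Let L be a Lie algebra over a commutative ring R and let N be a natural number. The R-bilinear bracket on the R-module Fin (N+1) →₀ L determined on generators by ⁅single α x, single β y⁆ = single (α+β) ⁅x,y⁆ when α+β ≤ N, and ⁅single α x, single β y⁆ = 0 when α+β > N, is alternating and satisfies the Jacobi (Leibniz) identity; hence it makes Fin (N+1) →₀ L into a Lie algebra over R (the expanded algebra 𝔊(N) of the power-series expansion, in the binary case). -/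
/-- The power-series expanded bracket on `Fin (N+1) →₀ L`, determined on generators by
`⁅single α x, single β y⁆ = single (α+β) ⁅x,y⁆` when `α+β ≤ N` and `0` otherwise, is
alternating and satisfies the Jacobi (Leibniz) identity, hence makes `Fin (N+1) →₀ L`
into a Lie algebra over `R` (the expanded algebra `𝔊(N)` in the binary case). -/
theorem expanded_bracket_isLieAlgebra {R L : Type*} [CommRing R] [LieRing L]
    [LieAlgebra R L] (N : ℕ)
    (B : (Fin (N + 1) →₀ L) →ₗ[R] (Fin (N + 1) →₀ L) →ₗ[R] (Fin (N + 1) →₀ L))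
    (hB : ∀ (α β : Fin (N + 1)) (x y : L),
      B (Finsupp.single α x) (Finsupp.single β y) =
        if h : (α : ℕ) + (β : ℕ) ≤ N
        then Finsupp.single (⟨(α : ℕ) + (β : ℕ), by omega⟩ : Fin (N + 1)) ⁅x, y⁆
        else 0) :
    (∀ u : Fin (N + 1) →₀ L, B u u = 0) ∧
    (∀ u v w : Fin (N + 1) →₀ L, B u (B v w) = B (B u v) w + B v (B u w)) := by
  have sym : ∀ u v, B u v + B v u = 0 := by
    intro u v
    induction u using Finsupp.induction_linear with
    | zero => simp
    | add f g hf hg =>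
      simp only [map_add, LinearMap.add_apply] at *
      linear_combination (norm := abel) hf + hg
    | single α x =>
      induction v using Finsupp.induction_linear with
      | zero => simp
      | add f g hf hg =>
        simp only [map_add, LinearMap.add_apply] at *
        linear_combination (norm := abel) hf + hg
      | single β y =>
        rw [hB, hB]
        split_ifs with h1 h2 h2
        · ext i
          simp only [Finsupp.add_apply, Finsupp.single_apply, Fin.ext_iff, Fin.val_mk,
            Finsupp.coe_zero, Pi.zero_apply]
          split_ifs with hc1 hc2 hc2 <;>
            first
              | (exfalso; omega)
              | simp
              | (rw [← lie_skew x y]; abel)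
        · omega
        · omega
        · simp
  have alt : ∀ u, B u u = 0 := by
    intro u
    induction u using Finsupp.induction_linear with
    | zero => simp
    | add f g hf hg =>
      simp only [map_add, LinearMap.add_apply, hf, hg]
      linear_combination (norm := abel) sym f g
    | single α x =>
      rw [hB]
      split_ifs <;> simp
  refine ⟨alt, ?_⟩
  have jac_gen : ∀ (α β γ : Fin (N+1)) (x y z : L),
      B (Finsupp.single α x) (B (Finsupp.single β y) (Finsupp.single γ z)) =
        B (B (Finsupp.single α x) (Finsupp.single β y)) (Finsupp.single γ z) +
          B (Finsupp.single β y) (B (Finsupp.single α x) (Finsupp.single γ z)) := by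
    intro α β γ x y z
    rw [hB α β, hB β γ, hB α γ]
    rcases le_or_gt ((α : ℕ) + (β : ℕ) + (γ : ℕ)) N with h | h
    · rw [dif_pos (by omega : (β : ℕ) + (γ : ℕ) ≤ N)]
      rw [dif_pos (by omega : (α : ℕ) + (β : ℕ) ≤ N)]
      rw [dif_pos (by omega : (α : ℕ) + (γ : ℕ) ≤ N)]
      rw [hB, hB, hB]
      rw [dif_pos (by simp only [Fin.val_mk]; omega)]
      rw [dif_pos (by simp only [Fin.val_mk]; omega)]
      rw [dif_pos (by simp only [Fin.val_mk]; omega)]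
      ext i
      simp only [Finsupp.add_apply, Finsupp.single_apply, Fin.ext_iff, Fin.val_mk]
      split_ifs with h1 h2 h3 <;>
        first
          | (exfalso; omega)
          | rw [leibniz_lie]
          | simp
    · split_ifs with h1 h2 h3 <;>
        simp only [map_zero, LinearMap.zero_apply, zero_add, add_zero, hB, Fin.val_mk] <;>
        (repeat' rw [dif_neg (by first | (simp only [Fin.val_mk]; omega) | omega)]) <;>
        simp
  intro u v w
  induction u using Finsupp.induction_linear with
  | zero => simp
  | add f g hf hg =>
    simp only [map_add, LinearMap.add_apply, hf, hg]; abel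
  | single α x =>
    induction v using Finsupp.induction_linear with
    | zero => simp
    | add f g hf hg =>
      simp only [map_add, LinearMap.add_apply, hf, hg]; abel
    | single β y =>
      induction w using Finsupp.induction_linear with
      | zero => simp
      | add f g hf hg =>
        simp only [map_add, LinearMap.add_apply, hf, hg]; abel
      | single γ z => exact jac_gen α β γ x y z
end

section
/- Let C : (Fin n → ι) → ι → k be totally antisymmetric structure constants satisfying the generalized Jacobi identity, let p : ι → Fin 2 be a degree map with the submultialgebra condition (C (i₁,…,iₙ) t = 0 whenever p(i_l) = 0 for all l and p(t) = 1), and let N : Fin 2 → ℕ satisfy N 1 = N 0 or N 1 = N 0 + 1. Let W = {(i,α) : ι × ℕ | p(i) ≤ α and α ≤ N (p i)}, and define truncated expanded structure constants on W by C̃ ((i₁,β₁),…,(iₙ,βₙ)) (t,α) = C (i₁,…,iₙ) t if β₁+⋯+βₙ = α, and 0 otherwise. Then C̃ is totally antisymmetric under simultaneous permutation (with sign) of its n lower index pairs and satisfies the generalized Jacobi identity on the finite index set W (with the intermediate summation index ranging over W); hence it determines a higher-order Lie algebra 𝔊(N₀,N₁) of order n. -/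
noncomputable section

/-- The truncated index set `W = {(i,α) : ι × ℕ | p i ≤ α ∧ α ≤ N (p i)}`. -/
abbrev TruncIdx {ι : Type*} (p : ι → Fin 2) (N : Fin 2 → ℕ) : Type _ :=
  {x : ι × ℕ // (p x.1 : ℕ) ≤ x.2 ∧ x.2 ≤ N (p x.1)}

/-- `W` is a finite set. -/
instance TruncIdx.instFintype {ι : Type*} [Fintype ι] (p : ι → Fin 2) (N : Fin 2 → ℕ) :
    Fintype (TruncIdx p N) := by
  apply Set.Finite.fintype (s := {x : ι × ℕ | (p x.1 : ℕ) ≤ x.2 ∧ x.2 ≤ N (p x.1)})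
  apply Set.Finite.subset (Set.finite_univ.prod (Set.finite_Iic (max (N 0) (N 1))))
  rintro ⟨a, m⟩ ⟨-, h2⟩
  refine ⟨Set.mem_univ _, ?_⟩
  have hle : N (p a) ≤ max (N 0) (N 1) := by
    have : p a = 0 ∨ p a = 1 := by omega
    rcases this with h | h <;> rw [h]
    · exact le_max_left _ _
    · exact le_max_right _ _
  exact le_trans h2 hle

/-- The truncated expanded structure constants on `W`:
`C̃ ((i₁,β₁),…,(iₙ,βₙ)) (t,α) = C (i₁,…,iₙ) t` if `β₁+⋯+βₙ = α`, and `0` otherwise. -/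
def truncExpandedC {k ι : Type*} [CommRing k] {n : ℕ} (C : (Fin n → ι) → ι → k)
    (p : ι → Fin 2) (N : Fin 2 → ℕ) :
    (Fin n → TruncIdx p N) → TruncIdx p N → k :=
  fun i t =>
    if (∑ l, ((i l : ι × ℕ)).2) = ((t : ι × ℕ)).2
    then C (fun l => ((i l : ι × ℕ)).1) ((t : ι × ℕ)).1 else 0

private lemma sum_range_split' {M : Type*} [AddCommMonoid M] {n : ℕ} (hn : 1 ≤ n) (G : ℕ → M) :
    ∑ i ∈ Finset.range (2*n-1), G i
      = (∑ i ∈ Finset.range n, G i)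
        + ∑ i ∈ Finset.range n, (if i = 0 then 0 else G (n+i-1)) := by
  obtain ⟨m, rfl⟩ := Nat.exists_eq_add_of_le hn
  rw [← Finset.sum_range_add_sum_Ico G (show 1+m ≤ 2*(1+m)-1 by omega)]
  congr 1
  rw [Finset.sum_Ico_eq_sum_range, show 2*(1+m)-1-(1+m) = m by omega]
  rw [show 1+m = m+1 by omega, Finset.sum_range_succ']
  simp [Nat.add_assoc, Nat.add_comm, Nat.add_left_comm]

private lemma sum_fin_ite {M : Type*} [AddCommMonoid M] {n : ℕ} (hn : 0 < n) (x : M) (g : Fin n → M) :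
    ∑ l : Fin n, (if (l:ℕ) = 0 then x else g l)
      = x + ∑ l : Fin n, (if (l:ℕ) = 0 then 0 else g l) := by
  have h : ∀ l : Fin n, (if (l:ℕ)=0 then x else g l)
      = (if (l:ℕ)=0 then x else 0) + (if (l:ℕ)=0 then 0 else g l) := fun l => by
    split <;> simp
  rw [Finset.sum_congr rfl (fun l _ => h l), Finset.sum_add_distrib]
  congr 1
  rw [Finset.sum_eq_single (⟨0, hn⟩ : Fin n)]
  · simp
  · intro a _ ha
    rw [if_neg (fun h0 => ha (Fin.ext h0))]
  · simp

private lemma sum_trunc_eq {k ι : Type*} [CommRing k] [Fintype ι]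
    {p : ι → Fin 2} {N : Fin 2 → ℕ} (a : ℕ) (F : ι → k)
    (hF : ∀ r : ι, ¬((p r : ℕ) ≤ a ∧ a ≤ N (p r)) → F r = 0) :
    ∑ ρ : TruncIdx p N, (if a = (ρ : ι × ℕ).2 then F (ρ : ι × ℕ).1 else 0) = ∑ r : ι, F r := by
  classical
  rw [← Finset.sum_filter]
  rw [← Finset.sum_filter_of_ne (p := fun r => (p r : ℕ) ≤ a ∧ a ≤ N (p r))
      (fun x _ hx => by by_contra h; exact hx (hF x h))]
  refine Finset.sum_bij' (fun ρ _ => (ρ : ι × ℕ).1) (fun r hr => ⟨(r, a), ?_⟩) ?_ ?_ ?_ ?_ ?_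
  · have := (Finset.mem_filter.mp hr).2
    exact ⟨this.1, this.2⟩
  · intro ρ hρ
    have h2 := (Finset.mem_filter.mp hρ).2
    have hprop := ρ.2
    simp only [Finset.mem_filter, Finset.mem_univ, true_and]
    rw [← h2] at hprop
    exact hprop
  · intro r hr
    simp
  · intro ρ hρ
    have h2 := (Finset.mem_filter.mp hρ).2
    exact Subtype.ext (Prod.ext rfl h2)
  · intro r hr
    rfl
  · intro ρ hρ
    rfl

private lemma hdeg_lemma {ι : Type*} {n : ℕ} (hn0 : 0 < n) {p : ι → Fin 2} {N : Fin 2 → ℕ}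
    (h : Fin n → TruncIdx p N) (ρ : TruncIdx p N) :
    (∑ l : Fin n, (((if hl : (l:ℕ) = 0 then ρ else h l) : TruncIdx p N) : ι × ℕ).2)
      = ((ρ : ι × ℕ)).2 + ∑ l : Fin n, (if (l:ℕ) = 0 then 0 else ((h l : ι × ℕ)).2) := by
  have e : ∀ l : Fin n, (((if hl : (l:ℕ) = 0 then ρ else h l) : TruncIdx p N) : ι × ℕ).2
      = if (l:ℕ) = 0 then ((ρ : ι × ℕ)).2 else ((h l : ι × ℕ)).2 := fun l => by
    split <;> rfl
  rw [Finset.sum_congr rfl fun l _ => e l, sum_fin_ite hn0]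

private lemma key_inner_zero {k ι : Type*} [CommRing k] [Fintype ι] {n : ℕ} (hn0 : 0 < n)
    {p : ι → Fin 2} {N : Fin 2 → ℕ} (C : (Fin n → ι) → ι → k)
    (g h : Fin n → TruncIdx p N) (t : TruncIdx p N)
    (hS : (∑ l : Fin n, ((g l : ι × ℕ)).2)
        + (∑ l : Fin n, if (l:ℕ) = 0 then 0 else ((h l : ι × ℕ)).2) ≠ ((t : ι × ℕ)).2) :
    (∑ ρ : TruncIdx p N,
      truncExpandedC C p N g ρ *
      truncExpandedC C p N (fun l => if hl : (l:ℕ) = 0 then ρ else h l) t) = 0 := by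
  refine Finset.sum_eq_zero fun ρ _ => ?_
  simp only [truncExpandedC]
  rw [hdeg_lemma hn0 h ρ]
  by_cases c1 : (∑ l : Fin n, ((g l : ι × ℕ)).2) = ((ρ : ι × ℕ)).2
  · rw [if_neg (show ¬(((ρ : ι × ℕ)).2
        + (∑ l : Fin n, if (l:ℕ) = 0 then 0 else ((h l : ι × ℕ)).2) = ((t : ι × ℕ)).2) from
      fun hh => hS (by rw [c1]; exact hh)), mul_zero]
  · rw [if_neg c1, zero_mul]

private lemma key_inner {k ι : Type*} [CommRing k] [Fintype ι] {n : ℕ} (hn0 : 0 < n)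
    {p : ι → Fin 2} {N : Fin 2 → ℕ} (C : (Fin n → ι) → ι → k)
    (hsub : ∀ (i : Fin n → ι) (t : ι), (∀ l, p (i l) = 0) → p t = 1 → C i t = 0)
    (hN : N 1 = N 0 ∨ N 1 = N 0 + 1)
    (g h : Fin n → TruncIdx p N) (t : TruncIdx p N)
    (hS : (∑ l : Fin n, ((g l : ι × ℕ)).2)
        + (∑ l : Fin n, if (l:ℕ) = 0 then 0 else ((h l : ι × ℕ)).2) = ((t : ι × ℕ)).2) :
    (∑ ρ : TruncIdx p N,
      truncExpandedC C p N g ρ *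
      truncExpandedC C p N (fun l => if hl : (l:ℕ) = 0 then ρ else h l) t)
    = ∑ r : ι,
        C (fun l => ((g l : ι × ℕ)).1) r *
        C (fun l => if hl : (l:ℕ) = 0 then r else ((h l : ι × ℕ)).1) ((t : ι × ℕ)).1 := by
  classical
  have hq2 : ∀ q : Fin 2, q = 0 ∨ q = 1 := by decide
  have hterm : ∀ ρ : TruncIdx p N,
      truncExpandedC C p N g ρ *
      truncExpandedC C p N (fun l => if hl : (l:ℕ) = 0 then ρ else h l) t
      = if (∑ l : Fin n, ((g l : ι × ℕ)).2) = ((ρ : ι × ℕ)).2 then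
          C (fun l => ((g l : ι × ℕ)).1) ((ρ : ι × ℕ)).1 *
          C (fun l => if hl : (l:ℕ) = 0 then ((ρ : ι × ℕ)).1
              else ((h l : ι × ℕ)).1) ((t : ι × ℕ)).1
        else 0 := by
    intro ρ
    have hcomp : (fun l : Fin n => (((if hl : (l:ℕ) = 0 then ρ else h l) : TruncIdx p N) : ι × ℕ).1)
        = (fun l : Fin n => if hl : (l:ℕ) = 0 then ((ρ : ι × ℕ)).1 else ((h l : ι × ℕ)).1) := by
      funext l; split <;> rfl
    simp only [truncExpandedC]
    rw [hdeg_lemma hn0 h ρ, hcomp]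
    by_cases c1 : (∑ l : Fin n, ((g l : ι × ℕ)).2) = ((ρ : ι × ℕ)).2
    · rw [if_pos c1, if_pos (show ((ρ : ι × ℕ)).2
          + (∑ l : Fin n, if (l:ℕ) = 0 then 0 else ((h l : ι × ℕ)).2) = ((t : ι × ℕ)).2 from
        by rw [← c1]; exact hS), if_pos c1]
    · rw [if_neg c1, zero_mul, if_neg c1]
  refine Eq.trans (Finset.sum_congr rfl fun ρ _ => hterm ρ) ?_
  refine sum_trunc_eq (∑ l : Fin n, ((g l : ι × ℕ)).2)
    (fun r => C (fun l => ((g l : ι × ℕ)).1) r *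
      C (fun l => if hl : (l:ℕ) = 0 then r else ((h l : ι × ℕ)).1) ((t : ι × ℕ)).1) ?_
  intro r hbad
  rcases Decidable.not_and_iff_or_not.mp hbad with h1 | h2
  · -- A < p r ≤ 1, so A = 0 and p r = 1; first factor vanishes
    have hpr1 : p r = 1 := by
      rcases hq2 (p r) with hh | hh
      · exact absurd (by rw [hh]; exact Nat.zero_le _) h1
      · exact hh
    have hprv : (p r : ℕ) = 1 := by rw [hpr1]; rfl
    have hA0 : (∑ l : Fin n, ((g l : ι × ℕ)).2) = 0 := by omega
    have hzero : ∀ l : Fin n, p ((g l : ι × ℕ)).1 = 0 := by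
      intro l
      have hdl : ((g l : ι × ℕ)).2 = 0 :=
        (Finset.sum_eq_zero_iff).mp hA0 l (Finset.mem_univ l)
      have hple := (g l).2.1
      rcases hq2 (p ((g l : ι × ℕ)).1) with hh | hh
      · exact hh
      · exfalso; rw [hh] at hple; simp at hple; omega
    beta_reduce
    rw [hsub _ _ hzero hpr1, zero_mul]
  · -- N (p r) < A : second factor vanishes (or contradiction)
    have hNlt : N (p r) < ∑ l : Fin n, ((g l : ι × ℕ)).2 := Nat.lt_of_not_le h2
    have ht2 : ((t : ι × ℕ)).2 ≤ N (p ((t : ι × ℕ)).1) := t.2.2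
    have htle : N (p ((t : ι × ℕ)).1) ≤ N 1 := by
      rcases hq2 (p ((t : ι × ℕ)).1) with hh | hh <;> rw [hh] <;> omega
    rcases hq2 (p r) with hpr | hpr
    · -- p r = 0
      rw [hpr] at hNlt
      have hN1 : N 1 ≤ N 0 + 1 := by omega
      have hReq : (∑ l : Fin n, if (l:ℕ) = 0 then 0 else ((h l : ι × ℕ)).2) = 0 := by omega
      have hpt : p ((t : ι × ℕ)).1 = 1 := by
        rcases hq2 (p ((t : ι × ℕ)).1) with hh | hh
        · exfalso; rw [hh] at ht2; omega
        · exact hh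
      have hzero : ∀ l : Fin n,
          p ((fun l : Fin n => if hl : (l:ℕ) = 0 then r else ((h l : ι × ℕ)).1) l) = 0 := by
        intro l
        by_cases h0 : (l:ℕ) = 0
        · simp only [h0, dif_pos]; exact hpr
        · simp only [h0, dif_neg, not_false_iff]
          have hdl : (if (l:ℕ) = 0 then 0 else ((h l : ι × ℕ)).2) = 0 :=
            (Finset.sum_eq_zero_iff).mp hReq l (Finset.mem_univ l)
          rw [if_neg h0] at hdl
          have hple := (h l).2.1
          rcases hq2 (p ((h l : ι × ℕ)).1) with hh | hh
          · exact hh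
          · exfalso; rw [hh] at hple; simp at hple; omega
      beta_reduce
      rw [hsub _ _ hzero hpt, mul_zero]
    · -- p r = 1 : contradiction
      exfalso; rw [hpr] at hNlt; omega

/-- If `V₀` is a submultialgebra and `N 1 = N 0` or `N 1 = N 0 + 1`, the truncated
expanded structure constants are totally antisymmetric and satisfy the generalized
Jacobi identity on the finite index set `W`; hence they determine the higher-order
Lie algebra `𝔊(N₀,N₁)` of order `n`. -/
theorem truncExpandedC_isMultialgebra {k ι : Type*} [CommRing k] [Fintype ι] {n : ℕ}
    (hn : 2 ≤ n) (C : (Fin n → ι) → ι → k)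
    (hA : IsTotallyAntisymmetric C) (hJ : SatisfiesGJI C)
    (p : ι → Fin 2)
    (hsub : ∀ (i : Fin n → ι) (t : ι), (∀ l, p (i l) = 0) → p t = 1 → C i t = 0)
    (N : Fin 2 → ℕ) (hN : N 1 = N 0 ∨ N 1 = N 0 + 1) :
    IsTotallyAntisymmetric (truncExpandedC C p N) ∧
    SatisfiesGJI (truncExpandedC C p N) := by
  classical
  have hn0 : 0 < n := by omega
  have hfin1 : ∀ l : Fin n, (l:ℕ) < 2*n-1 := fun l => by have := l.isLt; omega
  have hfin2 : ∀ l : Fin n, n + (l:ℕ) - 1 < 2*n-1 := fun l => by have := l.isLt; omega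
  constructor
  · intro σ i t
    simp only [truncExpandedC, Function.comp_apply]
    have h2 : (∑ l, ((i (σ l) : ι × ℕ)).2) = ∑ l, ((i l : ι × ℕ)).2 :=
      Equiv.sum_comp σ (fun l => ((i l : ι × ℕ)).2)
    rw [h2]
    by_cases hcond : (∑ l, ((i l : ι × ℕ)).2) = ((t : ι × ℕ)).2
    · rw [if_pos hcond, if_pos hcond]
      exact hA σ (fun l => ((i l : ι × ℕ)).1) ((t : ι × ℕ)).1
    · rw [if_neg hcond, if_neg hcond, smul_zero]
  · intro j t
    have hsplit : ∀ σ : Equiv.Perm (Fin (2*n-1)),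
        (∑ l : Fin n, ((j (σ ⟨(l:ℕ), hfin1 l⟩) : ι × ℕ)).2)
          + (∑ l : Fin n, if (l:ℕ) = 0 then 0
              else ((j (σ ⟨n+(l:ℕ)-1, hfin2 l⟩) : ι × ℕ)).2)
        = ∑ l : Fin (2*n-1), ((j l : ι × ℕ)).2 := by
      intro σ
      set G : ℕ → ℕ := fun i => if hi : i < 2*n-1 then ((j (σ ⟨i, hi⟩) : ι × ℕ)).2 else 0
        with hG
      have e1 : ∑ l : Fin (2*n-1), ((j l : ι × ℕ)).2
          = ∑ i ∈ Finset.range (2*n-1), G i := by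
        rw [← Equiv.sum_comp σ (fun l => ((j l : ι × ℕ)).2),
          ← Fin.sum_univ_eq_sum_range G (2*n-1)]
        exact Finset.sum_congr rfl fun l _ => by simp [hG, l.isLt]
      have e3 : ∑ l : Fin n, ((j (σ ⟨(l:ℕ), hfin1 l⟩) : ι × ℕ)).2
          = ∑ i ∈ Finset.range n, G i := by
        rw [← Fin.sum_univ_eq_sum_range G n]
        exact Finset.sum_congr rfl fun l _ => by simp [hG, hfin1 l]
      have e4 : (∑ l : Fin n, if (l:ℕ) = 0 then 0
            else ((j (σ ⟨n+(l:ℕ)-1, hfin2 l⟩) : ι × ℕ)).2)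
          = ∑ i ∈ Finset.range n, (if i = 0 then 0 else G (n+i-1)) := by
        rw [← Fin.sum_univ_eq_sum_range (fun i => if i = 0 then 0 else G (n+i-1)) n]
        refine Finset.sum_congr rfl fun l _ => ?_
        by_cases h0 : (l:ℕ) = 0
        · simp [h0]
        · simp [h0, hG, hfin2 l]
      rw [e1, e3, e4]
      exact (sum_range_split' (by omega) G).symm
    by_cases hc : (∑ l : Fin (2*n-1), ((j l : ι × ℕ)).2) = ((t : ι × ℕ)).2
    · refine Eq.trans (Finset.sum_congr rfl fun σ _ => ?_)
        (hJ (fun l => ((j l : ι × ℕ)).1) ((t : ι × ℕ)).1)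
      exact congrArg (fun x => ((Equiv.Perm.sign σ : ℤ)) • x)
        (key_inner hn0 C hsub hN (fun l => j (σ ⟨(l:ℕ), hfin1 l⟩))
          (fun l => j (σ ⟨n+(l:ℕ)-1, hfin2 l⟩)) t ((hsplit σ).trans hc))
    · refine Finset.sum_eq_zero fun σ _ => ?_
      refine Eq.trans (congrArg (fun x => ((Equiv.Perm.sign σ : ℤ)) • x)
        (key_inner_zero hn0 C (fun l => j (σ ⟨(l:ℕ), hfin1 l⟩))
          (fun l => j (σ ⟨n+(l:ℕ)-1, hfin2 l⟩)) t
          (fun hh => hc ((hsplit σ).symm.trans hh)))) (smul_zero _)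
end
end

section
/- (S-expansion of a higher-order Lie algebra.) Let S be a finite commutative semigroup and let C : (Fin n → ι) → ι → k be totally antisymmetric structure constants satisfying the generalized Jacobi identity. Define S-expanded structure constants on the index set ι × S by C̃ ((A₁,α₁),…,(Aₙ,αₙ)) (t,γ) = C (A₁,…,Aₙ) t if α₁·α₂·⋯·αₙ = γ in S, and C̃ ((A₁,α₁),…,(Aₙ,αₙ)) (t,γ) = 0 otherwise. Then C̃ is totally antisymmetric under simultaneous permutation (with sign) of its n lower index pairs and satisfies the generalized Jacobi identity on ι × S; hence the S-expanded multialgebra 𝔊 = S × 𝒢 is a higher-order Lie algebra of order n. -/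
open scoped Classical

noncomputable section

/-- The product `α₁·α₂·⋯·αₙ` of a family of semigroup elements, computed in the
monoid `WithOne S` (for `n ≥ 1` it is the genuine semigroup product, coerced). -/
def wprod {S : Type*} [CommSemigroup S] {n : ℕ} (f : Fin n → S) : WithOne S :=
  ∏ l, (f l : WithOne S)

/-- The `S`-expanded structure constants on `ι × S`:
`C̃ ((A₁,α₁),…,(Aₙ,αₙ)) (t,γ) = C (A₁,…,Aₙ) t` if `α₁·⋯·αₙ = γ` in `S`, else `0`. -/
def SExpandedC {k ι S : Type*} [CommRing k] [CommSemigroup S] {n : ℕ}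
    (C : (Fin n → ι) → ι → k) : (Fin n → ι × S) → (ι × S) → k :=
  fun A t =>
    if wprod (fun l => (A l).2) = ((t.2 : S) : WithOne S)
    then C (fun l => (A l).1) t.1 else 0

lemma wprod_eq_coe {S : Type*} [CommSemigroup S] :
    ∀ {m : ℕ} (f : Fin (m + 1) → S), ∃ p : S, wprod f = (p : WithOne S) := by
  intro m
  induction m with
  | zero => intro f; exact ⟨f 0, by simp [wprod]⟩
  | succ m ih =>
      intro f
      obtain ⟨p, hp⟩ := ih (fun i => f i.succ)
      refine ⟨f 0 * p, ?_⟩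
      rw [wprod, Fin.prod_univ_succ, WithOne.coe_mul, ← hp]
      rfl

lemma prod_split {M : Type*} [CommMonoid M] (m : ℕ) (f : Fin (2 * (m + 2) - 1) → M) :
    (∏ l : Fin (m + 2), f ⟨(l : ℕ), by omega⟩) *
      (∏ i : Fin (m + 1), f ⟨(m + 2) + (i : ℕ), by omega⟩) = ∏ x, f x := by
  set F : ℕ → M := fun i => if h : i < 2 * (m + 2) - 1 then f ⟨i, h⟩ else 1 with hF
  have h1 : ∏ x, f x = ∏ i ∈ Finset.range (2 * (m + 2) - 1), F i := by
    rw [← Fin.prod_univ_eq_prod_range F]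
    exact Finset.prod_congr rfl (fun x _ => by simp [hF, x.isLt])
  have h2 : 2 * (m + 2) - 1 = (m + 2) + (m + 1) := by omega
  have h2' : Finset.range (2 * (m + 2) - 1) = Finset.range ((m + 2) + (m + 1)) :=
    congrArg _ h2
  rw [h1, h2', Finset.prod_range_add]
  congr 1
  · rw [← Fin.prod_univ_eq_prod_range F]
    exact Finset.prod_congr rfl (fun x _ => by simp only [hF]; rw [dif_pos (by have := x.isLt; omega)])
  · rw [← Fin.prod_univ_eq_prod_range (fun i => F ((m + 2) + i))]
    exact Finset.prod_congr rfl (fun x _ => by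
      simp only [hF]; rw [dif_pos (by have := x.isLt; omega)])

/-- (S-expansion of a higher-order Lie algebra.) If `S` is a finite abelian semigroup
and `C` are totally antisymmetric structure constants satisfying the generalized
Jacobi identity, then the `S`-expanded structure constants are totally antisymmetric
and satisfy the generalized Jacobi identity on `ι × S`; hence the `S`-expanded
multialgebra `𝔊 = S × 𝒢` is a higher-order Lie algebra of order `n`. -/
theorem sExpandedC_isMultialgebra {k ι S : Type*} [CommRing k] [Fintype ι]
    [CommSemigroup S] [Fintype S] {n : ℕ} (hn : 2 ≤ n)
    (C : (Fin n → ι) → ι → k)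
    (hA : IsTotallyAntisymmetric C) (hJ : SatisfiesGJI C) :
    IsTotallyAntisymmetric (SExpandedC (S := S) C) ∧
    SatisfiesGJI (SExpandedC (S := S) C) := by
  constructor
  · intro σ A t
    have hw : wprod (fun l => ((A ∘ σ) l).2) = wprod (fun l => (A l).2) :=
      Equiv.prod_comp σ (fun l => ((A l).2 : WithOne S))
    simp only [SExpandedC]
    rw [hw]
    split_ifs with h
    · exact hA σ (fun l => (A l).1) t.1
    · simp
  · intro j t
    obtain ⟨m, rfl⟩ : ∃ m, n = m + 2 := ⟨n - 2, by omega⟩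
    have h0 : ∀ σ : Equiv.Perm (Fin (2 * (m + 2) - 1)),
        (∑ ρ : ι × S,
          SExpandedC (S := S) C
              (fun l : Fin (m + 2) =>
                j (σ ⟨(l : ℕ), lt_of_lt_of_le l.isLt (by omega)⟩)) ρ *
            SExpandedC (S := S) C
              (fun l : Fin (m + 2) =>
                if hl : (l : ℕ) = 0 then ρ
                else j (σ ⟨m + 2 + (l : ℕ) - 1, by have := l.isLt; omega⟩)) t) =
        (if wprod (fun x => (j x).2) = ((t.2 : S) : WithOne S) then
          ∑ ρ : ι,
            C (fun l : Fin (m + 2) =>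
                (j (σ ⟨(l : ℕ), lt_of_lt_of_le l.isLt (by omega)⟩)).1) ρ *
              C (fun l : Fin (m + 2) =>
                if hl : (l : ℕ) = 0 then ρ
                else (j (σ ⟨m + 2 + (l : ℕ) - 1, by have := l.isLt; omega⟩)).1) t.1
         else 0) := by
      intro σ
      obtain ⟨p, hp⟩ := wprod_eq_coe (m := m + 1)
        (fun l : Fin (m + 2) => (j (σ ⟨(l : ℕ), lt_of_lt_of_le l.isLt (by omega)⟩)).2)
      set Q : WithOne S :=
        ∏ i : Fin (m + 1), ((j (σ ⟨(m + 2) + (i : ℕ), by omega⟩)).2 : WithOne S) with hQ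
      have hsplit : (↑p : WithOne S) * Q = wprod (fun x => (j x).2) := by
        rw [← hp, hQ]
        rw [show wprod (fun x => (j x).2) =
              ∏ x, ((j (σ x)).2 : WithOne S) from
          (Equiv.prod_comp σ (fun x => ((j x).2 : WithOne S))).symm]
        exact prod_split m (fun x => ((j (σ x)).2 : WithOne S))
      have hA1 : ∀ (r : ι) (s : S),
          SExpandedC (S := S) C
            (fun l : Fin (m + 2) =>
              j (σ ⟨(l : ℕ), lt_of_lt_of_le l.isLt (by omega)⟩)) (r, s) =
          if (↑p : WithOne S) = ↑s then
            C (fun l : Fin (m + 2) =>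
                (j (σ ⟨(l : ℕ), lt_of_lt_of_le l.isLt (by omega)⟩)).1) r
          else 0 := by
        intro r s
        simp only [SExpandedC]
        rw [hp]
      have hB : ∀ (r : ι) (s : S),
          SExpandedC (S := S) C
            (fun l : Fin (m + 2) =>
              if hl : (l : ℕ) = 0 then ((r, s) : ι × S)
              else j (σ ⟨m + 2 + (l : ℕ) - 1, by have := l.isLt; omega⟩)) t =
          if ((s : WithOne S) * Q) = ((t.2 : S) : WithOne S) then
            C (fun l : Fin (m + 2) =>
                if hl : (l : ℕ) = 0 then r
                else (j (σ ⟨m + 2 + (l : ℕ) - 1, by have := l.isLt; omega⟩)).1) t.1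
          else 0 := by
        intro r s
        simp only [SExpandedC]
        have hcond : wprod (fun l : Fin (m + 2) =>
            (if hl : (l : ℕ) = 0 then ((r, s) : ι × S)
             else j (σ ⟨m + 2 + (l : ℕ) - 1, by have := l.isLt; omega⟩)).2) = ↑s * Q := by
          rw [wprod, Fin.prod_univ_succ, hQ]
          congr 1
        rw [hcond]
        have hfun : (fun l : Fin (m + 2) =>
            (if hl : (l : ℕ) = 0 then ((r, s) : ι × S)
             else j (σ ⟨m + 2 + (l : ℕ) - 1, by have := l.isLt; omega⟩)).1) =
            (fun l : Fin (m + 2) =>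
              if hl : (l : ℕ) = 0 then r
              else (j (σ ⟨m + 2 + (l : ℕ) - 1, by have := l.isLt; omega⟩)).1) :=
          funext fun l => apply_dite Prod.fst _ _ _
        rw [hfun]
      rw [Fintype.sum_prod_type]
      simp only [hA1, hB]
      have e1 : ∀ (x y : k) (s : S),
          (if (↑p : WithOne S) = ↑s then x else 0) *
            (if ((s : WithOne S) * Q) = ((t.2 : S) : WithOne S) then y else 0) =
          if s = p then
            (if ((p : WithOne S) * Q) = ((t.2 : S) : WithOne S) then x * y else 0)
          else 0 := by
        intro x y s
        by_cases hs : s = p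
        · subst hs
          simp [mul_ite]
        · rw [if_neg (fun h => hs (WithOne.coe_inj.mp h).symm), zero_mul, if_neg hs]
      simp only [e1]
      simp only [Finset.sum_ite_eq' Finset.univ, Finset.mem_univ, if_true]
      rw [hsplit]
      by_cases hc : wprod (fun x => (j x).2) = ((t.2 : S) : WithOne S)
      · simp [hc]
      · simp [hc]
    refine Eq.trans (Finset.sum_congr rfl fun σ _ =>
      congrArg (fun x => ((Equiv.Perm.sign σ : ℤ) • x)) (h0 σ)) ?_
    by_cases hD : wprod (fun x => (j x).2) = ((t.2 : S) : WithOne S)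
    · simp only [if_pos hD]
      exact hJ (fun x => (j x).1) t.1
    · simp only [if_neg hD, smul_zero, Finset.sum_const_zero]
end
end

section
/- Let S be a commutative semigroup with an absorbing element z (z·s = z for all s ∈ S) and L a Lie algebra over a commutative ring R. The R-bilinear bracket on the R-module {s : S // s ≠ z} →₀ L determined on generators by ⁅single s x, single t y⁆ = single (s·t) ⁅x,y⁆ if s·t ≠ z, and ⁅single s x, single t y⁆ = 0 if s·t = z, is alternating and satisfies the Jacobi (Leibniz) identity; hence it makes {s : S // s ≠ z} →₀ L into a Lie algebra over R (the 0_S-reduced S-expanded Lie algebra, in the binary case). -/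
open scoped Classical

/-- Let `z` be an absorbing element of the abelian semigroup `S`. The `0_S`-reduced
`S`-expanded bracket on `{s : S // s ≠ z} →₀ L`, determined on generators by
`⁅single s x, single t y⁆ = single (s·t) ⁅x,y⁆` when `s·t ≠ z` and `0` when
`s·t = z`, is alternating and satisfies the Jacobi (Leibniz) identity; hence it
makes `{s : S // s ≠ z} →₀ L` into a Lie algebra over `R`
(the `0_S`-reduced `S`-expanded Lie algebra, in the binary case). -/
theorem reduced_sExpanded_bracket_isLieAlgebra {R L S : Type*} [CommRing R]
    [LieRing L] [LieAlgebra R L] [CommSemigroup S]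
    (z : S) (hz : ∀ s : S, z * s = z)
    (B : ({s : S // s ≠ z} →₀ L) →ₗ[R] ({s : S // s ≠ z} →₀ L) →ₗ[R]
          ({s : S // s ≠ z} →₀ L))
    (hB : ∀ (s t : {s : S // s ≠ z}) (x y : L),
      B (Finsupp.single s x) (Finsupp.single t y) =
        if h : (s : S) * (t : S) = z then 0
        else Finsupp.single (⟨(s : S) * (t : S), h⟩ : {s : S // s ≠ z}) ⁅x, y⁆) :
    (∀ u : {s : S // s ≠ z} →₀ L, B u u = 0) ∧
    (∀ u v w : {s : S // s ≠ z} →₀ L,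
      B u (B v w) = B (B u v) w + B v (B u w)) := by
  classical
  have hz' : ∀ s : S, s * z = z := fun s => by rw [mul_comm]; exact hz s
  have hanti : ∀ u v, B u v + B v u = 0 := by
    intro u
    induction u using Finsupp.induction_linear with
    | zero => intro v; simp
    | add f g hf hg =>
        intro v
        simp only [map_add, LinearMap.add_apply]
        rw [add_add_add_comm, hf, hg, add_zero]
    | single s x =>
        intro v
        induction v using Finsupp.induction_linear with
        | zero => simp
        | add f g hf hg =>
            simp only [map_add, LinearMap.add_apply]
            rw [add_add_add_comm, hf, hg, add_zero]
        | single t y =>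
            rw [hB, hB]
            by_cases h : (s : S) * (t : S) = z
            · rw [dif_pos h, dif_pos (by rw [mul_comm]; exact h), add_zero]
            · have h2 : (t : S) * (s : S) ≠ z := by rw [mul_comm]; exact h
              rw [dif_neg h, dif_neg h2,
                show (⟨(t : S) * (s : S), h2⟩ : {s : S // s ≠ z}) =
                  ⟨(s : S) * (t : S), h⟩ from Subtype.ext (mul_comm _ _),
                ← Finsupp.single_add, ← lie_skew, neg_add_cancel, Finsupp.single_zero]
  constructor
  · intro u
    induction u using Finsupp.induction with
    | zero => simp
    | single_add a b f haf hb hf =>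
        simp only [map_add, LinearMap.add_apply]
        have h1 : B (Finsupp.single a b) (Finsupp.single a b) = 0 := by
          rw [hB]
          split_ifs
          · rfl
          · simp
        rw [h1, hf, zero_add, add_zero, hanti]
  · intro u
    induction u using Finsupp.induction_linear with
    | zero => intro v w; simp
    | add f g hf hg =>
        intro v w
        simp only [map_add, LinearMap.add_apply]
        rw [hf, hg]; abel
    | single s x =>
        intro v
        induction v using Finsupp.induction_linear with
        | zero => intro w; simp
        | add f g hf hg =>
            intro w
            simp only [map_add, LinearMap.add_apply]
            rw [hf, hg]; abel
        | single t y =>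
            intro w
            induction w using Finsupp.induction_linear with
            | zero => simp
            | add f g hf hg =>
                simp only [map_add, LinearMap.add_apply]
                rw [hf, hg]; abel
            | single r c =>
                rw [hB t r y c, hB s t x y, hB s r x c]
                split_ifs with h1 h2 h3 h4 h5 h6 h7
                · -- t*r=z, s*t=z, s*r=z
                  simp
                · -- t*r=z, s*t=z, s*r≠z
                  rw [hB]
                  split_ifs with hq
                  · simp
                  · exact absurd (show (t:S) * ((s:S) * (r:S)) = z by
                      rw [mul_left_comm, h1, hz']) hq
                · -- t*r=z, s*t≠z, s*r=z
                  rw [hB]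
                  split_ifs with hq
                  · simp
                  · exact absurd (show ((s:S) * (t:S)) * (r:S) = z by
                      rw [mul_assoc, h1, hz']) hq
                · -- t*r=z, s*t≠z, s*r≠z
                  rw [hB, hB]
                  split_ifs with hq hq2 hq3
                  · simp
                  · exact absurd (show (t:S) * ((s:S) * (r:S)) = z by
                      rw [mul_left_comm, h1, hz']) hq2
                  · exact absurd (show ((s:S) * (t:S)) * (r:S) = z by
                      rw [mul_assoc, h1, hz']) hq
                  · exact absurd (show ((s:S) * (t:S)) * (r:S) = z by
                      rw [mul_assoc, h1, hz']) hq
                · -- t*r≠z, s*t=z, s*r=z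
                  rw [hB]
                  split_ifs with hq
                  · simp
                  · exact absurd (show (s:S) * ((t:S) * (r:S)) = z by
                      rw [← mul_assoc, h5, hz]) hq
                · -- t*r≠z, s*t=z, s*r≠z
                  rw [hB, hB]
                  split_ifs with hq hq2 hq3
                  · simp
                  · exact absurd (show (t:S) * ((s:S) * (r:S)) = z by
                      rw [mul_left_comm, ← mul_assoc, h5, hz]) hq2
                  · exact absurd (show (s:S) * ((t:S) * (r:S)) = z by
                      rw [← mul_assoc, h5, hz]) hq
                  · exact absurd (show (s:S) * ((t:S) * (r:S)) = z by
                      rw [← mul_assoc, h5, hz]) hq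
                · -- t*r≠z, s*t≠z, s*r=z
                  rw [hB, hB]
                  split_ifs with hq hq2 hq3
                  · simp
                  · exact absurd (show ((s:S) * (t:S)) * (r:S) = z by
                      rw [mul_assoc, mul_left_comm, h7, hz']) hq2
                  · exact absurd (show (s:S) * ((t:S) * (r:S)) = z by
                      rw [mul_left_comm, h7, hz']) hq
                  · exact absurd (show (s:S) * ((t:S) * (r:S)) = z by
                      rw [mul_left_comm, h7, hz']) hq
                · -- t*r≠z, s*t≠z, s*r≠z
                  rw [hB, hB, hB]
                  by_cases hp : (s:S) * ((t:S) * (r:S)) = z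
                  · rw [dif_pos hp, dif_pos ((mul_assoc (s:S) (t:S) (r:S)).trans hp),
                      dif_pos ((mul_left_comm (t:S) (s:S) (r:S)).trans hp), add_zero]
                  · have hp5 : ((⟨(s:S) * (t:S), h5⟩ : {s : S // s ≠ z}) : S) * (r:S) ≠ z :=
                      fun hc => hp ((mul_assoc (s:S) (t:S) (r:S)).symm.trans hc)
                    have hp6 : (t:S) * ((⟨(s:S) * (r:S), h7⟩ : {s : S // s ≠ z}) : S) ≠ z :=
                      fun hc => hp ((mul_left_comm (s:S) (t:S) (r:S)).trans hc)
                    rw [dif_neg hp, dif_neg hp5, dif_neg hp6,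
                      show (⟨((⟨(s:S) * (t:S), h5⟩ : {s : S // s ≠ z}) : S) * (r:S), hp5⟩ :
                          {s : S // s ≠ z}) = ⟨(s:S) * ((t:S) * (r:S)), hp⟩ from
                        Subtype.ext (mul_assoc _ _ _),
                      show (⟨(t:S) * ((⟨(s:S) * (r:S), h7⟩ : {s : S // s ≠ z}) : S), hp6⟩ :
                          {s : S // s ≠ z}) = ⟨(s:S) * ((t:S) * (r:S)), hp⟩ from
                        Subtype.ext (mul_left_comm _ _ _),
                      ← Finsupp.single_add, ← leibniz_lie]
end

section
/- Let S be a commutative semigroup, L a Lie algebra over a commutative ring R, and equip S →₀ L with the S-expanded bracket determined by ⁅single s x, single t y⁆ = single (s·t) ⁅x,y⁆. Let I be a type, (V_p)_{p ∈ I} a family of R-submodules of L, and i : I → I → Set I such that ⁅V_p, V_q⁆ ⊆ Σ_{r ∈ i(p,q)} V_r (the submodule generated by the V_r with r ∈ i(p,q)) for all p, q ∈ I, and let (S_p)_{p ∈ I} be subsets of S satisfying the resonance condition: for all p, q ∈ I, s ∈ S_p and t ∈ S_q, the product s·t belongs to ⋂_{r ∈ i(p,q)} S_r. Then the R-submodule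 of S →₀ L generated by { single s v : p ∈ I, s ∈ S_p, v ∈ V_p } is closed under the bracket, i.e. it is a Lie subalgebra of the S-expanded Lie algebra (the resonant subalgebra 𝔊_R = ⊕_{p ∈ I} S_p ⊗ V_p). -/
/-- (Resonant subalgebra of the S-expanded Lie algebra, binary case.) Let `S →₀ L`
carry the `S`-expanded bracket `⁅single s x, single t y⁆ = single (s·t) ⁅x,y⁆`.
Given submodules `V p` of `L` with `⁅V p, V q⁆ ⊆ Σ_{r ∈ idx p q} V r` and subsets
`Sp p ⊆ S` in resonance (`s ∈ Sp p, t ∈ Sp q → s·t ∈ ⋂_{r ∈ idx p q} Sp r`), the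
submodule generated by `{single s v | p ∈ I, s ∈ Sp p, v ∈ V p}` is closed under the
bracket: it is a Lie subalgebra (the resonant subalgebra `𝔊_R = ⊕_p Sp p ⊗ V p`). -/
theorem resonant_subalgebra_closed {R L S I : Type*} [CommRing R] [LieRing L]
    [LieAlgebra R L] [CommSemigroup S]
    (B : (S →₀ L) →ₗ[R] (S →₀ L) →ₗ[R] (S →₀ L))
    (hB : ∀ (s t : S) (x y : L),
      B (Finsupp.single s x) (Finsupp.single t y) = Finsupp.single (s * t) ⁅x, y⁆)
    (V : I → Submodule R L) (idx : I → I → Set I)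
    (hV : ∀ p q : I, ∀ x ∈ V p, ∀ y ∈ V q, ⁅x, y⁆ ∈ ⨆ r ∈ idx p q, V r)
    (Sp : I → Set S)
    (hres : ∀ p q : I, ∀ s ∈ Sp p, ∀ t ∈ Sp q, ∀ r ∈ idx p q, s * t ∈ Sp r) :
    ∀ u v : S →₀ L,
      u ∈ Submodule.span R
        {f : S →₀ L | ∃ p : I, ∃ s ∈ Sp p, ∃ x ∈ V p, f = Finsupp.single s x} →
      v ∈ Submodule.span R
        {f : S →₀ L | ∃ p : I, ∃ s ∈ Sp p, ∃ x ∈ V p, f = Finsupp.single s x} →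
      B u v ∈ Submodule.span R
        {f : S →₀ L | ∃ p : I, ∃ s ∈ Sp p, ∃ x ∈ V p, f = Finsupp.single s x} := by
  intro u v hu hv
  set M := Submodule.span R
      {f : S →₀ L | ∃ p : I, ∃ s ∈ Sp p, ∃ x ∈ V p, f = Finsupp.single s x} with hM
  induction hu using Submodule.span_induction with
  | mem u hu =>
    induction hv using Submodule.span_induction with
    | mem v hv =>
      obtain ⟨p, s, hs, x, hx, rfl⟩ := hu
      obtain ⟨q, t, ht, y, hy, rfl⟩ := hv
      rw [hB]
      have key : (⨆ r ∈ idx p q, V r).map (Finsupp.lsingle (R := R) (s * t)) ≤ M := by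
        rw [Submodule.map_iSup]
        apply iSup_le
        intro r
        rw [Submodule.map_iSup]
        apply iSup_le
        intro hr
        rintro - ⟨z, hz, rfl⟩
        exact Submodule.subset_span ⟨r, s * t, hres p q s hs t ht r hr, z, hz, rfl⟩
      exact key ⟨⁅x, y⁆, hV p q x hx y hy, rfl⟩
    | zero => simp only [map_zero]; exact M.zero_mem
    | add a b _ _ ha hb => rw [map_add]; exact M.add_mem ha hb
    | smul c a _ ha => rw [map_smul]; exact M.smul_mem c ha
  | zero => simp only [map_zero, LinearMap.zero_apply]; exact M.zero_mem
  | add a b _ _ ha hb => rw [map_add, LinearMap.add_apply]; exact M.add_mem ha hb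
  | smul c a _ ha => rw [map_smul, LinearMap.smul_apply]; exact M.smul_mem c ha
end

section
/- (Vanishing lemma for the reduction of a resonant submultialgebra.) Let C, P : ι → I, i : (Fin n → I) → Set I, S, and (S_p)_{p ∈ I} be as in the resonance setting (C (a₁,…,aₙ) c ≠ 0 implies P(c) ∈ i(P(a₁),…,P(aₙ)), and S_{p₁}·⋯·S_{pₙ} ⊆ ⋂_{r ∈ i(p₁,…,pₙ)} S_r). Suppose each S_p is partitioned as S_p = Š_p ∪ Ŝ_p with Š_p ∩ Ŝ_p = ∅, and that for all p₁,…,pₙ ∈ I: Ŝ_{p₁}·Š_{p₂}·⋯·Š_{pₙ} ⊆ ⋂_{r ∈ i(p₁,…,pₙ)} Ŝ_r. Define C̃ ((a₁,α₁),…,(aₙ,αₙ)) (c,γ) = C (a₁,…,aₙ) c if α₁·⋯·αₙ = γ, and 0 otherwise. Then C̃ ((a₁,α₁),…,(aₙ,αₙ)) (c,γ) = 0 whenever α₁ ∈ Ŝ_{P(a₁)}, α_l ∈ Š_{P(a_l)} for l = 2,…,n, and γ ∈ Š_{P(c)}; i.e. [Ĝ_R, Ǧ_R, …, Ǧ_R]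 ⊆ Ĝ_R. -/
open scoped Classical

noncomputable section

/-- (Vanishing lemma for the reduction of a resonant submultialgebra.) In the
resonance setting, if each `Sp p` is partitioned as `Sc p ∪ Sh p` (disjointly) and
`Ŝ_{p₁}·Š_{p₂}·⋯·Š_{pₙ} ⊆ ⋂_{r ∈ idx p} Ŝ_r`, then the expanded structure constant
`C̃ ((a₁,α₁),…,(aₙ,αₙ)) (c,γ)` vanishes whenever `α₁ ∈ Ŝ_{P a₁}`,
`α_l ∈ Š_{P a_l}` for `l ≥ 2`, and `γ ∈ Š_{P c}`; i.e.
`[Ĝ_R, Ǧ_R, …, Ǧ_R] ⊆ Ĝ_R`. -/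
theorem reduction_vanishing {k ι S I : Type*} [CommRing k] [CommSemigroup S] {n : ℕ}
    (hn : 2 ≤ n)
    (C : (Fin n → ι) → ι → k) (P : ι → I) (idx : (Fin n → I) → Set I)
    (hstruct : ∀ (a : Fin n → ι) (c : ι), C a c ≠ 0 → P c ∈ idx (fun l => P (a l)))
    (Sp Sc Sh : I → Set S)
    (hpart : ∀ p : I, Sp p = Sc p ∪ Sh p)
    (hdisj : ∀ p : I, Sc p ∩ Sh p = ∅)
    (hres : ∀ (p : Fin n → I) (s : Fin n → S), (∀ l, s l ∈ Sp (p l)) →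
      ∀ r ∈ idx p, ∃ u ∈ Sp r, wprod s = (u : WithOne S))
    (hred : ∀ (p : Fin n → I) (s : Fin n → S),
      s ⟨0, by omega⟩ ∈ Sh (p ⟨0, by omega⟩) →
      (∀ l : Fin n, (l : ℕ) ≠ 0 → s l ∈ Sc (p l)) →
      ∀ r ∈ idx p, ∃ u ∈ Sh r, wprod s = (u : WithOne S))
    (a : Fin n → ι) (α : Fin n → S) (c : ι) (γ : S)
    (h1 : α ⟨0, by omega⟩ ∈ Sh (P (a ⟨0, by omega⟩)))
    (hl : ∀ l : Fin n, (l : ℕ) ≠ 0 → α l ∈ Sc (P (a l)))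
    (hγ : γ ∈ Sc (P c)) :
    SExpandedC C (fun l => (a l, α l)) (c, γ) = 0 := by
  unfold SExpandedC
  simp only
  split_ifs with h
  · by_contra hC
    have hmem := hstruct a c hC
    obtain ⟨u, hu, heq⟩ := hred (fun l => P (a l)) α h1 hl _ hmem
    have : γ = u := by
      have := h.symm.trans heq
      exact_mod_cast this
    exact absurd (hdisj (P c)) (Set.nonempty_iff_ne_empty.mp ⟨u, this ▸ hγ, hu⟩)
  · rfl
end
end
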